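/- In the linear imputation model with m(x; β) = x'β and h(x; β) = x, the mass imputation estimator admits the exact decomposition θ̂_I - θ_N = (N^{-1} Σ_{i∈A} w_i x_i'β* - N^{-1} Σ_{i=1}^N x_i'β*) + N^{-1} Σ_{i∈B} ĉ'x_i e_i* - N^{-1} Σ_{i=1}^N e_i*, where β* is any fixed vector, e_i* = y_i - x_i'β*, β̂ = (Σ_{i∈B} x_i x_i')^{-1} Σ_{i∈B} x_i y_i (with the Gram matrix invertible), θ̂_I = N^{-1} Σ_{i∈A} w_i x_i'β̂, θ_N = N^{-1} Σ_{i=1}^N y_i, and ĉ = (Σ_{i∈B} x_i x_i')^{-1} Σ_{i∈A} w_i x_i. -/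

import Mathlib

open Finset Matrix

/-- Exact linearization of the mass imputation estimator under the linear
imputation model: for any fixed `β*`,
`θ̂_I - θ_N = (N⁻¹∑_A wᵢxᵢ'β* - N⁻¹∑ᵢxᵢ'β*) + N⁻¹∑_B ĉ'xᵢ eᵢ* - N⁻¹∑ᵢ eᵢ*`. -/
theorem mass_imputation_linear_decomposition (N p : ℕ) (hN : 0 < N)
    (A B : Finset (Fin N)) (w : Fin N → ℝ) (x : Fin N → Fin p → ℝ)
    (y : Fin N → ℝ) (βstar : Fin p → ℝ)
    (M : Matrix (Fin p) (Fin p) ℝ)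
    (hM : ∀ j k, M j k = ∑ i ∈ B, x i j * x i k)
    (hMinv : IsUnit M.det)
    (βhat chat : Fin p → ℝ)
    (hβhat : βhat = M⁻¹.mulVec (fun j => ∑ i ∈ B, x i j * y i))
    (hchat : chat = M⁻¹.mulVec (fun j => ∑ i ∈ A, w i * x i j)) :
    (N : ℝ)⁻¹ * ∑ i ∈ A, w i * ∑ j, x i j * βhat j - (N : ℝ)⁻¹ * ∑ i, y i
      = ((N : ℝ)⁻¹ * ∑ i ∈ A, w i * ∑ j, x i j * βstar j
            - (N : ℝ)⁻¹ * ∑ i, ∑ j, x i j * βstar j)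
        + (N : ℝ)⁻¹ * ∑ i ∈ B, (∑ j, chat j * x i j) * (y i - ∑ j, x i j * βstar j)
        - (N : ℝ)⁻¹ * ∑ i, (y i - ∑ j, x i j * βstar j) := by
  have hMsymm : M.IsSymm := by
    ext j k
    simp only [Matrix.transpose_apply, hM]
    exact Finset.sum_congr rfl fun i _ => mul_comm _ _
  have hMinvsymm : M⁻¹.IsSymm := by
    rw [Matrix.IsSymm, Matrix.transpose_nonsing_inv, hMsymm.eq]
  set tA : Fin p → ℝ := fun j => ∑ i ∈ A, w i * x i j with htA
  set v : Fin p → ℝ := fun j => ∑ i ∈ B, x i j * y i with hv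
  set u : Fin p → ℝ := fun j => ∑ i ∈ B, x i j * (y i - ∑ l, x i l * βstar l)
    with hu
  have hu_eq : u = v - M.mulVec βstar := by
    funext j
    simp only [hu, Pi.sub_apply, Matrix.mulVec, dotProduct, hM, hv]
    have hswap : ∑ k, (∑ i ∈ B, x i j * x i k) * βstar k
        = ∑ i ∈ B, ∑ k, x i j * x i k * βstar k := by
      rw [show ∀ (f : Fin p → ℝ), (∑ k, (∑ i ∈ B, x i j * x i k) * f k)
          = ∑ k, ∑ i ∈ B, x i j * x i k * f k from
          fun f => Finset.sum_congr rfl fun k _ => Finset.sum_mul _ _ _]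
      exact Finset.sum_comm
    rw [hswap, ← Finset.sum_sub_distrib]
    refine Finset.sum_congr rfl fun i _ => ?_
    rw [mul_sub]
    congr 1
    rw [Finset.mul_sum]
    exact Finset.sum_congr rfl fun l _ => by ring
  have hβdiff : βhat - βstar = M⁻¹.mulVec u := by
    rw [hu_eq, Matrix.mulVec_sub, hβhat]
    congr 1
    rw [Matrix.mulVec_mulVec, Matrix.nonsing_inv_mul M hMinv, Matrix.one_mulVec]
  have hkey : (tA ⬝ᵥ (βhat - βstar)) = chat ⬝ᵥ u := by
    rw [hβdiff, hchat, Matrix.dotProduct_mulVec, ← Matrix.mulVec_transpose,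
      hMinvsymm.eq]
  have hL : ∑ i ∈ A, w i * ∑ j, x i j * βhat j
      - ∑ i ∈ A, w i * ∑ j, x i j * βstar j
      = ∑ i ∈ B, (∑ j, chat j * x i j) * (y i - ∑ l, x i l * βstar l) := by
    have h1 : ∑ i ∈ A, w i * ∑ j, x i j * βhat j
        - ∑ i ∈ A, w i * ∑ j, x i j * βstar j = tA ⬝ᵥ (βhat - βstar) := by
      simp only [dotProduct, htA, Pi.sub_apply]
      rw [← Finset.sum_sub_distrib]
      have : ∀ i ∈ A, w i * ∑ j, x i j * βhat j - w i * ∑ j, x i j * βstar j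
          = ∑ j, (w i * x i j * βhat j - w i * x i j * βstar j) := by
        intro i _
        rw [Finset.mul_sum, Finset.mul_sum, ← Finset.sum_sub_distrib]
        exact Finset.sum_congr rfl fun j _ => by ring
      rw [Finset.sum_congr rfl this, Finset.sum_comm]
      refine Finset.sum_congr rfl fun j _ => ?_
      rw [Finset.sum_sub_distrib, ← Finset.sum_mul, ← Finset.sum_mul]
      ring
    have h2 : ∑ i ∈ B, (∑ j, chat j * x i j) * (y i - ∑ l, x i l * βstar l)
        = chat ⬝ᵥ u := by
      simp only [dotProduct, hu]
      have : ∀ i ∈ B, (∑ j, chat j * x i j) * (y i - ∑ l, x i l * βstar l)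
          = ∑ j, chat j * (x i j * (y i - ∑ l, x i l * βstar l)) := by
        intro i _
        rw [Finset.sum_mul]
        exact Finset.sum_congr rfl fun j _ => by ring
      rw [Finset.sum_congr rfl this, Finset.sum_comm]
      exact Finset.sum_congr rfl fun j _ => (Finset.mul_sum _ _ _).symm
    rw [h1, h2, hkey]
  have hY : ∑ i, (y i - ∑ j, x i j * βstar j)
      = ∑ i, y i - ∑ i, ∑ j, x i j * βstar j := Finset.sum_sub_distrib _ _
  rw [hY]
  linear_combination (N : ℝ)⁻¹ * hL
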